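/- arXiv:2107.01597 — 3 statements merged into one kernel-verified Lean document; each statement's English description precedes it below -/
import Mathlib

section
/- Let (X,f) be a functional module homomorphism between right functional A-modules E and F (i.e. X : E → F is a right A-module map, f : Θ_A(E) → Θ_A(F) is a left A-module map, and f(φ)(X(ξ)) = φ(ξ) for all φ, ξ) with X surjective. Then there is a ring homomorphism σ : K_A(E) → K_A(F) with σ(θ_{ξ,φ}) = θ_{X(ξ),f(φ)}, and f is automatically injective. -/
/-- Let `(X, f)` be a functional module homomorphism between right functional `A`-modules
`E` and `F` (so `X : E → F` is a right `A`-module map, `f : Θ_A(E) → Θ_A(F)` is a left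
`A`-module map, and `f(φ)(X(ξ)) = φ(ξ)` for all `φ ∈ Θ_A(E)`, `ξ ∈ E`) with `X` surjective.
Then there is a ring homomorphism `σ : K_A(E) → K_A(F)` with
`σ(θ_{ξ,φ}) = θ_{X(ξ), f(φ)}`, and `f` is automatically injective. -/
theorem stmt9 {A : Type*} [NonUnitalRing A]
    {E : Type*} [AddCommGroup E] {F : Type*} [AddCommGroup F]
    -- right `A`-module structures
    (smE : E → A → E) (smF : F → A → F)
    (smE_add_left : ∀ (ξ η : E) (a : A), smE (ξ + η) a = smE ξ a + smE η a)
    (smE_add_right : ∀ (ξ : E) (a b : A), smE ξ (a + b) = smE ξ a + smE ξ b)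
    (smE_mul : ∀ (ξ : E) (a b : A), smE (smE ξ a) b = smE ξ (a * b))
    (smF_add_left : ∀ (ξ η : F) (a : A), smF (ξ + η) a = smF ξ a + smF η a)
    (smF_add_right : ∀ (ξ : F) (a b : A), smF ξ (a + b) = smF ξ a + smF ξ b)
    (smF_mul : ∀ (ξ : F) (a b : A), smF (smF ξ a) b = smF ξ (a * b))
    -- functional spaces
    (ΘE : Set (E →+ A)) (ΘF : Set (F →+ A))
    (hΘElin : ∀ φ ∈ ΘE, ∀ (ξ : E) (a : A), φ (smE ξ a) = φ ξ * a)
    (hΘFlin : ∀ φ ∈ ΘF, ∀ (ξ : F) (a : A), φ (smF ξ a) = φ ξ * a)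
    -- the functional module homomorphism `(X, fmap)`
    (X : E →+ F)
    (hX_lin : ∀ (ξ : E) (a : A), X (smE ξ a) = smF (X ξ) a)
    (hX_surj : Function.Surjective X)
    (fmap : (E →+ A) → (F →+ A))
    (hf_mem : ∀ φ ∈ ΘE, fmap φ ∈ ΘF)
    (hf_add : ∀ φ ∈ ΘE, ∀ ψ ∈ ΘE, fmap (φ + ψ) = fmap φ + fmap ψ)
    (hf_smul : ∀ φ ∈ ΘE, ∀ a : A,
      fmap ((AddMonoidHom.mulLeft a).comp φ) = (AddMonoidHom.mulLeft a).comp (fmap φ))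
    (hcompat : ∀ φ ∈ ΘE, ∀ ξ : E, (fmap φ) (X ξ) = φ ξ)
    -- the compact operators
    (KE : AddSubgroup (E →+ E))
    (hKE : KE = AddSubgroup.closure
      {T : E →+ E | ∃ η : E, ∃ φ ∈ ΘE, ∀ ξ : E, T ξ = smE η (φ ξ)})
    (KF : AddSubgroup (F →+ F))
    (hKF : KF = AddSubgroup.closure
      {T : F →+ F | ∃ η : F, ∃ φ ∈ ΘF, ∀ ξ : F, T ξ = smF η (φ ξ)}) :
    (∃ σ : (E →+ E) → (F →+ F),
        (∀ T ∈ KE, σ T ∈ KF) ∧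
        (∀ T ∈ KE, ∀ S ∈ KE, σ (T + S) = σ T + σ S) ∧
        (∀ T ∈ KE, ∀ S ∈ KE, σ (T.comp S) = (σ T).comp (σ S)) ∧
        (∀ (η : E), ∀ φ ∈ ΘE, ∀ T : E →+ E,
          (∀ ξ : E, T ξ = smE η (φ ξ)) → ∀ ξ' : F, σ T ξ' = smF (X η) ((fmap φ) ξ'))) ∧
      (∀ φ ∈ ΘE, ∀ ψ ∈ ΘE, fmap φ = fmap ψ → φ = ψ) := by

  -- injectivity of `fmap` on `ΘE`
  have hinj : ∀ φ ∈ ΘE, ∀ ψ ∈ ΘE, fmap φ = fmap ψ → φ = ψ := by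
    intro φ hφ ψ hψ h
    ext ξ
    have := congrArg (fun g => g (X ξ)) h
    simpa [hcompat φ hφ ξ, hcompat ψ hψ ξ] using this
  refine ⟨?_, hinj⟩
  -- the pushforward relation
  set Good : (E →+ E) → (F →+ F) → Prop :=
    fun T S => ∀ ξ : E, S (X ξ) = X (T ξ) with hGood
  have huniq : ∀ T S₁ S₂, Good T S₁ → Good T S₂ → S₁ = S₂ := by
    intro T S₁ S₂ h1 h2
    ext ζ
    obtain ⟨ξ, rfl⟩ := hX_surj ζ
    rw [h1 ξ, h2 ξ]
  -- existence of a pushforward (in KF) for every T in KE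
  have hex : ∀ T ∈ KE, ∃ S ∈ KF, Good T S := by
    intro T hT
    rw [hKE] at hT
    refine AddSubgroup.closure_induction ?_ ?_ ?_ ?_ hT
    · rintro T ⟨η, φ, hφ, hTξ⟩
      refine ⟨AddMonoidHom.mk' (fun ζ => smF (X η) ((fmap φ) ζ)) ?_, ?_, ?_⟩
      · intro a b; simp only [map_add, smF_add_right]
      · rw [hKF]
        exact AddSubgroup.subset_closure ⟨X η, fmap φ, hf_mem φ hφ, fun ξ => rfl⟩
      · intro ξ
        show smF (X η) ((fmap φ) (X ξ)) = X (T ξ)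
        rw [hcompat φ hφ ξ, hTξ ξ, hX_lin]
    · exact ⟨0, KF.zero_mem, fun ξ => by simp⟩
    · rintro T₁ T₂ _ _ ⟨S₁, hS₁, hg₁⟩ ⟨S₂, hS₂, hg₂⟩
      exact ⟨S₁ + S₂, KF.add_mem hS₁ hS₂, fun ξ => by
        simp [AddMonoidHom.add_apply, hg₁ ξ, hg₂ ξ]⟩
    · rintro T _ ⟨S, hS, hg⟩
      exact ⟨-S, KF.neg_mem hS, fun ξ => by simp [hg ξ]⟩
  classical
  refine ⟨fun T => if h : ∃ S, Good T S then h.choose else 0, ?_, ?_, ?_, ?_⟩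
  · intro T hT
    obtain ⟨S, hSKF, hSg⟩ := hex T hT
    have h : ∃ S, Good T S := ⟨S, hSg⟩
    simp only [dif_pos h]
    rwa [huniq T h.choose S h.choose_spec hSg]
  · intro T hT S hS
    obtain ⟨ST, _, hTg⟩ := hex T hT
    obtain ⟨SS, _, hSg⟩ := hex S hS
    have hT' : ∃ S', Good T S' := ⟨ST, hTg⟩
    have hS' : ∃ S', Good S S' := ⟨SS, hSg⟩
    have hTS : ∃ S', Good (T + S) S' := ⟨hT'.choose + hS'.choose, fun ξ => by
      simp [AddMonoidHom.add_apply, hT'.choose_spec ξ, hS'.choose_spec ξ]⟩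
    simp only [dif_pos hT', dif_pos hS', dif_pos hTS]
    exact huniq (T + S) _ _ hTS.choose_spec (fun ξ => by
      simp [AddMonoidHom.add_apply, hT'.choose_spec ξ, hS'.choose_spec ξ])
  · intro T hT S hS
    obtain ⟨ST, _, hTg⟩ := hex T hT
    obtain ⟨SS, _, hSg⟩ := hex S hS
    have hT' : ∃ S', Good T S' := ⟨ST, hTg⟩
    have hS' : ∃ S', Good S S' := ⟨SS, hSg⟩
    have hcomp : ∃ S', Good (T.comp S) S' := ⟨hT'.choose.comp hS'.choose, fun ξ => by
      simp [AddMonoidHom.comp_apply, hS'.choose_spec ξ, hT'.choose_spec (S ξ)]⟩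
    simp only [dif_pos hT', dif_pos hS', dif_pos hcomp]
    exact huniq (T.comp S) _ _ hcomp.choose_spec (fun ξ => by
      simp [AddMonoidHom.comp_apply, hS'.choose_spec ξ, hT'.choose_spec (S ξ)])
  · intro η φ hφ T hTξ ξ'
    have hTKE : T ∈ KE := by
      rw [hKE]; exact AddSubgroup.subset_closure ⟨η, φ, hφ, hTξ⟩
    obtain ⟨ST, _, hTg⟩ := hex T hTKE
    have h : ∃ S', Good T S' := ⟨ST, hTg⟩
    simp only [dif_pos h]
    have : h.choose = AddMonoidHom.mk' (fun ζ => smF (X η) ((fmap φ) ζ))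
        (by intro a b; simp only [map_add, smF_add_right]) := by
      refine huniq T _ _ h.choose_spec ?_
      intro ξ
      show smF (X η) ((fmap φ) (X ξ)) = X (T ξ)
      rw [hcompat φ hφ ξ, hTξ ξ, hX_lin]
    rw [this]; rfl
end

section
/- Let A be a quadratik ring with G-action, (M₂(A),θ) a G-ring such that the corner embeddings e₁₁ : (A,α) → (M₂(A),θ) and e₂₂ : (A,δ) → (M₂(A),θ) are G-equivariant. Then θ is 'entrywise': there exist maps β_g, γ_g on A such that θ_g applied to the matrix with entries (x,y;z,w) equals the matrix (α_g(x), β_g(y); γ_g(z), δ_g(w)); moreover the relations γ_g(ax) = δ_g(a)γ_g(x), γ_g(xb) = γ_g(x)α_g(b), β_g(ax) = α_g(a)β_g(x), β_g(xb) = β_g(x)δ_g(b), α_g(xy) = β_g(x)γ_g(y), δ_g(xy) = γ_g(x)β_g(y), and γ_{gh} = γ_g γ_h, β_{gh} = β_g β_h hold for all g,h ∈ G and a,b,x,y ∈ A. -/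
/-- A ring `A` is *quadratik* if every element of `A` is a finite sum of products `a * b`. -/
def IsQuadratik (A : Type*) [NonUnitalRing A] : Prop :=
  ∀ x : A, x ∈ AddSubgroup.closure {z : A | ∃ a b : A, z = a * b}

open Matrix

private lemma std_inj {A : Type*} [NonUnitalRing A] {i j : Fin 2} {a b : A}
    (h : single i j a = single i j b) : a = b := by
  have := congrFun (congrFun h i) j
  simpa using this

private lemma std_split {A : Type*} [NonUnitalRing A] (i j k : Fin 2) (a b : A) :
    single i k (a * b) = single i j a * single j k b :=
  (Matrix.single_mul_single_same i j k (c := a) b).symm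

private lemma std_neg {A : Type*} [NonUnitalRing A] (i j : Fin 2) (u : A) :
    single i j (-u) = -(single i j u) := by
  ext a b
  simp only [Matrix.single, Matrix.of_apply, Matrix.neg_apply]
  split <;> simp

/-- Let `A` be a quadratik ring with `G`-actions `α, δ`, and let `θ` be a `G`-action on
`M₂(A)` such that the corner embeddings `e₁₁ : (A,α) → (M₂(A),θ)` and
`e₂₂ : (A,δ) → (M₂(A),θ)` are `G`-equivariant.  Then `θ` is entrywise:
there are `β_g, γ_g : A → A` with `θ_g (x y; z w) = (α_g x, β_g y; γ_g z, δ_g w)`, and the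
relations `γ_g(ax) = δ_g(a)γ_g(x)`, `γ_g(xb) = γ_g(x)α_g(b)`, `β_g(ax) = α_g(a)β_g(x)`,
`β_g(xb) = β_g(x)δ_g(b)`, `α_g(xy) = β_g(x)γ_g(y)`, `δ_g(xy) = γ_g(x)β_g(y)`,
`γ_{gh} = γ_g γ_h` and `β_{gh} = β_g β_h` hold. -/
theorem stmt15 {G : Type*} [Group G] {A : Type*} [NonUnitalRing A]
    (hA : IsQuadratik A)
    (α δ : G →* RingAut A)
    (θ : G →* RingAut (Matrix (Fin 2) (Fin 2) A))
    (h11 : ∀ (g : G) (a : A),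
      θ g (Matrix.single 0 0 a) = Matrix.single 0 0 (α g a))
    (h22 : ∀ (g : G) (a : A),
      θ g (Matrix.single 1 1 a) = Matrix.single 1 1 (δ g a)) :
    ∃ β γ : G → A → A,
      (∀ (g : G) (x y z w : A),
        θ g !![x, y; z, w] = !![α g x, β g y; γ g z, δ g w]) ∧
      (∀ (g : G) (a x : A), γ g (a * x) = δ g a * γ g x) ∧
      (∀ (g : G) (x b : A), γ g (x * b) = γ g x * α g b) ∧
      (∀ (g : G) (a x : A), β g (a * x) = α g a * β g x) ∧
      (∀ (g : G) (x b : A), β g (x * b) = β g x * δ g b) ∧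
      (∀ (g : G) (x y : A), α g (x * y) = β g x * γ g y) ∧
      (∀ (g : G) (x y : A), δ g (x * y) = γ g x * β g y) ∧
      (∀ (g h : G) (x : A), γ (g * h) x = γ g (γ h x)) ∧
      (∀ (g h : G) (x : A), β (g * h) x = β g (β h x)) := by
  classical
  have hcomp : ∀ (g h : G) (M : Matrix (Fin 2) (Fin 2) A),
      θ (g * h) M = θ g (θ h M) := by
    intro g h M; rw [_root_.map_mul]; rfl
  set β : G → A → A := fun g x => θ g (single 0 1 x) 0 1 with hβ
  set γ : G → A → A := fun g x => θ g (single 1 0 x) 1 0 with hγ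
  have key12 : ∀ (g : G) (x : A),
      θ g (single 0 1 x) = single 0 1 (β g x) := by
    intro g x
    have P : ∀ y : A, θ g (single 0 1 y) 0 0 = 0 ∧
        θ g (single 0 1 y) 1 0 = 0 ∧ θ g (single 0 1 y) 1 1 = 0 := by
      intro y
      refine AddSubgroup.closure_induction ?_ ?_ ?_ ?_ (hA y)
      · rintro z ⟨a, b, rfl⟩
        have hrow : θ g (single 0 1 (a * b))
            = single 0 0 (α g a) * θ g (single 0 1 b) := by
          rw [std_split 0 0 1 a b, _root_.map_mul, h11]
        have hcol : θ g (single 0 1 (a * b))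
            = θ g (single 0 1 a) * single 1 1 (δ g b) := by
          rw [std_split 0 1 1 a b, _root_.map_mul, h22]
        refine ⟨?_, ?_, ?_⟩
        · rw [hcol]; simp
        · rw [hrow]; simp
        · rw [hrow]; simp
      · simp
      · intro u v _ _ hu hv
        simp only [Matrix.single_add, map_add, Matrix.add_apply]
        exact ⟨by rw [hu.1, hv.1, add_zero], by rw [hu.2.1, hv.2.1, add_zero],
          by rw [hu.2.2, hv.2.2, add_zero]⟩
      · intro u _ hu
        simp only [std_neg, map_neg, Matrix.neg_apply]
        exact ⟨by rw [hu.1, neg_zero], by rw [hu.2.1, neg_zero], by rw [hu.2.2, neg_zero]⟩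
    refine Matrix.ext fun i j => ?_
    fin_cases i <;> fin_cases j
    · simpa using (P x).1
    · simp [hβ]
    · simpa using (P x).2.1
    · simpa using (P x).2.2
  have key21 : ∀ (g : G) (x : A),
      θ g (single 1 0 x) = single 1 0 (γ g x) := by
    intro g x
    have P : ∀ y : A, θ g (single 1 0 y) 0 0 = 0 ∧
        θ g (single 1 0 y) 0 1 = 0 ∧ θ g (single 1 0 y) 1 1 = 0 := by
      intro y
      refine AddSubgroup.closure_induction ?_ ?_ ?_ ?_ (hA y)
      · rintro z ⟨a, b, rfl⟩
        have hrow : θ g (single 1 0 (a * b))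
            = single 1 1 (δ g a) * θ g (single 1 0 b) := by
          rw [std_split 1 1 0 a b, _root_.map_mul, h22]
        have hcol : θ g (single 1 0 (a * b))
            = θ g (single 1 0 a) * single 0 0 (α g b) := by
          rw [std_split 1 0 0 a b, _root_.map_mul, h11]
        refine ⟨?_, ?_, ?_⟩
        · rw [hrow]; simp
        · rw [hcol]; simp
        · rw [hcol]; simp
      · simp
      · intro u v _ _ hu hv
        simp only [Matrix.single_add, map_add, Matrix.add_apply]
        exact ⟨by rw [hu.1, hv.1, add_zero], by rw [hu.2.1, hv.2.1, add_zero],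
          by rw [hu.2.2, hv.2.2, add_zero]⟩
      · intro u _ hu
        simp only [std_neg, map_neg, Matrix.neg_apply]
        exact ⟨by rw [hu.1, neg_zero], by rw [hu.2.1, neg_zero], by rw [hu.2.2, neg_zero]⟩
    refine Matrix.ext fun i j => ?_
    fin_cases i <;> fin_cases j
    · simpa using (P x).1
    · simpa using (P x).2.1
    · simp [hγ]
    · simpa using (P x).2.2
  refine ⟨β, γ, ?_, ?_, ?_, ?_, ?_, ?_, ?_, ?_, ?_⟩
  · intro g x y z w
    have hdecomp : ∀ x y z w : A, (!![x, y; z, w] : Matrix (Fin 2) (Fin 2) A)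
        = single 0 0 x + single 0 1 y
          + single 1 0 z + single 1 1 w := by
      intro x y z w
      ext i j
      fin_cases i <;> fin_cases j <;> simp [Matrix.single]
    rw [hdecomp, map_add, map_add, map_add, h11, h22, key12, key21, ← hdecomp]
  · intro g a x
    refine std_inj (i := 1) (j := 0) ?_
    rw [← key21, std_split 1 1 0 a x, _root_.map_mul, h22, key21,
      Matrix.single_mul_single_same]
  · intro g x b
    refine std_inj (i := 1) (j := 0) ?_
    rw [← key21, std_split 1 0 0 x b, _root_.map_mul, h11, key21,
      Matrix.single_mul_single_same]
  · intro g a x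
    refine std_inj (i := 0) (j := 1) ?_
    rw [← key12, std_split 0 0 1 a x, _root_.map_mul, h11, key12,
      Matrix.single_mul_single_same]
  · intro g x b
    refine std_inj (i := 0) (j := 1) ?_
    rw [← key12, std_split 0 1 1 x b, _root_.map_mul, h22, key12,
      Matrix.single_mul_single_same]
  · intro g x y
    refine std_inj (i := 0) (j := 0) ?_
    rw [← h11, std_split 0 1 0 x y, _root_.map_mul, key12, key21,
      Matrix.single_mul_single_same]
  · intro g x y
    refine std_inj (i := 1) (j := 1) ?_
    rw [← h22, std_split 1 0 1 x y, _root_.map_mul, key21, key12,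
      Matrix.single_mul_single_same]
  · intro g h x
    refine std_inj (i := 1) (j := 0) ?_
    rw [← key21, hcomp, key21, key21]
  · intro g h x
    refine std_inj (i := 0) (j := 1) ?_
    rw [← key12, hcomp, key12, key12]
end

section
/- Given an injective ring homomorphism i : B → M whose image is a two-sided ideal in M, and a ring homomorphism s : A → M, the set M □_s A := { (s(a)+i(b), a) ∈ M ⊕ A : a ∈ A, b ∈ B } is a subring of M ⊕ A, and there is a split exact sequence 0 → B →^j M□_sA →^f A → 0 with j(b) = (i(b),0), f(m,a) = a, and split (s□1)(a) = (s(a),a). Moreover, if A and B are quadratik, then M □_s A is quadratik. -/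
lemma quadAux {R N : Type*} [NonUnitalRing R] [NonUnitalRing N] (g : R →ₙ+* N)
    (T : Set N) (hg : ∀ a b : R, g a * g b ∈ T) :
    ∀ x ∈ AddSubgroup.closure {z : R | ∃ a b : R, z = a * b},
      g x ∈ AddSubgroup.closure T := by
  intro x hx
  induction hx using AddSubgroup.closure_induction with
  | mem z hz =>
    obtain ⟨a', b', rfl⟩ := hz
    rw [map_mul]
    exact AddSubgroup.subset_closure (hg a' b')
  | zero => rw [map_zero]; exact (AddSubgroup.closure T).zero_mem
  | add x y _ _ hx hy => rw [map_add]; exact (AddSubgroup.closure T).add_mem hx hy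
  | neg x _ hx => rw [map_neg]; exact (AddSubgroup.closure T).neg_mem hx

/-- Given an injective ring homomorphism `i : B → M` whose image is a two-sided ideal in
`M`, and a ring homomorphism `s : A → M`, the set
`M □_s A = { (s(a)+i(b), a) : a ∈ A, b ∈ B } ⊆ M ⊕ A` is a subring, and there is a split
exact sequence `0 → B → M□_sA → A → 0` with `j(b) = (i(b),0)`, `f(m,a) = a` and split
`(s□1)(a) = (s(a),a)`.  Moreover, if `A` and `B` are quadratik then so is `M □_s A`. -/
theorem stmt16 {A B M : Type*} [NonUnitalRing A] [NonUnitalRing B] [NonUnitalRing M]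
    (i : B →ₙ+* M) (hi : Function.Injective i)
    (hideal_l : ∀ (m : M) (b : B), m * i b ∈ Set.range i)
    (hideal_r : ∀ (m : M) (b : B), i b * m ∈ Set.range i)
    (s : A →ₙ+* M)
    (D : Set (M × A)) (hD : D = {p : M × A | ∃ (a : A) (b : B), p = (s a + i b, a)}) :
    -- `D = M □_s A` is a subring of `M ⊕ A`
    (∀ p ∈ D, ∀ q ∈ D, p + q ∈ D) ∧
    (∀ p ∈ D, -p ∈ D) ∧
    (∀ p ∈ D, ∀ q ∈ D, p * q ∈ D) ∧
    -- `j : B → M □_s A`, `j(b) = (i(b),0)`, is injective with image the kernel of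
    -- `f : M □_s A → A`, `f(m,a) = a`
    Function.Injective (fun b : B => ((i b, 0) : M × A)) ∧
    (∀ b : B, ((i b, (0 : A)) : M × A) ∈ D) ∧
    (∀ p ∈ D, (p.2 = 0 ↔ ∃ b : B, p = (i b, 0))) ∧
    -- `s □ 1` is a split of `f`
    (∀ a : A, ((s a, a) : M × A) ∈ D) ∧
    (∀ a : A, ((s a, a) : M × A).2 = a) ∧
    -- quadratik-ness
    (IsQuadratik A → IsQuadratik B →
      ∀ p ∈ D, p ∈ AddSubgroup.closure {q : M × A | ∃ u ∈ D, ∃ v ∈ D, q = u * v}) := by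
  subst hD
  have hsA : ∀ a : A, ((s a, a) : M × A) ∈
      {p : M × A | ∃ (a : A) (b : B), p = (s a + i b, a)} := by
    intro a; exact ⟨a, 0, by simp⟩
  have hjB : ∀ b : B, ((i b, (0 : A)) : M × A) ∈
      {p : M × A | ∃ (a : A) (b : B), p = (s a + i b, a)} := by
    intro b; exact ⟨0, b, by simp⟩
  refine ⟨?_, ?_, ?_, ?_, hjB, ?_, hsA, fun _ => rfl, ?_⟩
  · rintro p ⟨a, b, rfl⟩ q ⟨a', b', rfl⟩
    refine ⟨a + a', b + b', ?_⟩
    simp only [Prod.ext_iff, Prod.mk_add_mk, map_add]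
    exact ⟨by abel, trivial⟩
  · rintro p ⟨a, b, rfl⟩
    refine ⟨-a, -b, ?_⟩
    simp only [Prod.ext_iff, Prod.neg_mk, map_neg]
    exact ⟨by abel, trivial⟩
  · rintro p ⟨a, b, rfl⟩ q ⟨a', b', rfl⟩
    obtain ⟨c₁, hc₁⟩ := hideal_l (s a) b'
    obtain ⟨c₂, hc₂⟩ := hideal_r (s a') b
    refine ⟨a * a', c₁ + c₂ + b * b', ?_⟩
    simp only [Prod.ext_iff, Prod.mk_mul_mk, map_add, map_mul, mul_add, add_mul, hc₁, hc₂]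
    exact ⟨by abel, trivial⟩
  · intro b b' h
    exact hi (by simpa [Prod.ext_iff] using h)
  · rintro p ⟨a, b, rfl⟩
    constructor
    · rintro h
      simp only at h
      subst h
      exact ⟨b, by simp⟩
    · rintro ⟨b', h⟩
      rw [Prod.ext_iff] at h
      exact h.2
  · intro hA hB p hp
    obtain ⟨a, b, rfl⟩ := hp
    set S : Set (M × A) := {q : M × A | ∃ u ∈ {p : M × A | ∃ (a : A) (b : B), p = (s a + i b, a)},
      ∃ v ∈ {p : M × A | ∃ (a : A) (b : B), p = (s a + i b, a)}, q = u * v} with hS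
    let gA : A →ₙ+* M × A :=
      { toFun := fun a => (s a, a)
        map_zero' := show ((s 0, (0:A)) : M × A) = 0 by rw [map_zero]; rfl
        map_add' := fun x y => by simp [Prod.ext_iff]
        map_mul' := fun x y => by simp [Prod.ext_iff] }
    let gB : B →ₙ+* M × A :=
      { toFun := fun b => (i b, 0)
        map_zero' := show ((i 0, (0:A)) : M × A) = 0 by rw [map_zero]; rfl
        map_add' := fun x y => by simp [Prod.ext_iff]
        map_mul' := fun x y => by simp [Prod.ext_iff] }
    have h1 := quadAux gA S (fun x y => ⟨gA x, hsA x, gA y, hsA y, rfl⟩) a (hA a)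
    have h2 := quadAux gB S (fun x y => ⟨gB x, hjB x, gB y, hjB y, rfl⟩) b (hB b)
    have h3 := (AddSubgroup.closure S).add_mem h1 h2
    have he : (gA a + gB b) = ((s a + i b, a) : M × A) := by
      show ((s a + i b, a + 0) : M × A) = (s a + i b, a)
      rw [add_zero]
    rw [← he]
    exact h3
end
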